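/- Let T > 0 and let g ∈ L²(AddCircle T; ℂ) with first Fourier coefficient ĝ(1) ≠ 0. Then the family of dilations (gₙ)_{n ∈ ℕ+}, where gₙ(x) = g(n • x), is linearly independent in L²(AddCircle T). -/

import Mathlib

open MeasureTheory

section Aux

variable {T : ℝ} [hT : Fact (0 < T)]

private lemma mp_nsmul (n : ℕ+) :
    MeasurePreserving (fun x : AddCircle T => (n : ℕ) • x)
      AddCircle.haarAddCircle AddCircle.haarAddCircle := by
  have h : MeasurePreserving (fun x : AddCircle T => ((n : ℕ) : ℤ) • x)
      AddCircle.haarAddCircle AddCircle.haarAddCircle :=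
    MeasureTheory.Measure.measurePreserving_zsmul _ (by exact_mod_cast n.ne_zero)
  simpa [natCast_zsmul] using h

private lemma integrable_dilate {g : AddCircle T → ℂ}
    (hg : MeasureTheory.MemLp g 2 AddCircle.haarAddCircle) (n : ℕ+) :
    Integrable (fun x : AddCircle T => g ((n : ℕ) • x)) AddCircle.haarAddCircle := by
  have hgi : Integrable g AddCircle.haarAddCircle :=
    hg.integrable (by norm_num)
  exact ((mp_nsmul n).integrable_comp hgi.aestronglyMeasurable).mpr hgi

private lemma integrable_fourier_smul {g : AddCircle T → ℂ}
    (hg : MeasureTheory.MemLp g 2 AddCircle.haarAddCircle) (n : ℕ+) (m : ℤ) :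
    Integrable (fun x : AddCircle T => fourier (-m) x • g ((n : ℕ) • x))
      AddCircle.haarAddCircle := by
  have := (integrable_dilate hg n).bdd_mul (c := 1)
    ((fourier (-m)).continuous.aestronglyMeasurable) (ae_of_all _ fun x => by
      simp [fourier_apply, Circle.norm_coe])
  simpa [smul_eq_mul] using this

/-- Multiplicativity of `fourier` in the point variable. -/
private lemma fourier_add_pt (m : ℤ) (x y : AddCircle T) :
    fourier m (x + y) = fourier m x * fourier m y := by
  simp only [fourier_apply, smul_add, AddCircle.toCircle_add, Circle.coe_mul]

/-- The Fourier coefficient of the `n`-th dilation at frequency `n` is `ĝ(1)`. -/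
private lemma coeff_dilate_self {g : AddCircle T → ℂ}
    (hg : MeasureTheory.MemLp g 2 AddCircle.haarAddCircle) (n : ℕ+) :
    fourierCoeff (fun x : AddCircle T => g ((n : ℕ) • x)) (n : ℤ) = fourierCoeff g 1 := by
  rw [fourierCoeff, fourierCoeff]
  have key : ∀ x : AddCircle T, fourier (-(n : ℤ)) x • g ((n : ℕ) • x)
      = (fun y : AddCircle T => fourier (-1) y • g y) ((n : ℕ) • x) := by
    intro x
    simp only
    congr 1
    rw [fourier_apply, fourier_apply,
      show (-1 : ℤ) • ((n : ℕ) • x) = (-(n : ℤ)) • x from by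
        rw [← natCast_zsmul x (n : ℕ), smul_smul]; norm_num]
  simp_rw [key]
  have hF : AEStronglyMeasurable (fun y : AddCircle T => fourier (-1) y • g y)
      AddCircle.haarAddCircle := by
    exact ((fourier (-1)).continuous.aestronglyMeasurable).smul hg.aestronglyMeasurable
  calc ∫ x : AddCircle T, (fun y : AddCircle T => fourier (-1) y • g y) ((n : ℕ) • x)
        ∂AddCircle.haarAddCircle
      = ∫ y : AddCircle T, fourier (-1) y • g y
          ∂(Measure.map (fun x : AddCircle T => (n : ℕ) • x) AddCircle.haarAddCircle) := by
        rw [integral_map (mp_nsmul n).measurable.aemeasurable]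
        rwa [(mp_nsmul n).map_eq]
    _ = ∫ y : AddCircle T, fourier (-1) y • g y ∂AddCircle.haarAddCircle := by
        rw [(mp_nsmul n).map_eq]

/-- If `n ∤ m`, the Fourier coefficient of the `n`-th dilation at frequency `m` vanishes. -/
private lemma coeff_dilate_zero {g : AddCircle T → ℂ}
    (hg : MeasureTheory.MemLp g 2 AddCircle.haarAddCircle) (n : ℕ+) (m : ℤ)
    (hm : ¬ ((n : ℤ) ∣ m)) :
    fourierCoeff (fun x : AddCircle T => g ((n : ℕ) • x)) m = 0 := by
  set t₀ : AddCircle T := ((T / (n : ℕ) : ℝ) : AddCircle T) with ht₀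
  have hnt : (n : ℕ) • t₀ = 0 := by
    rw [ht₀, ← QuotientAddGroup.mk_nsmul]
    have : (n : ℕ) • (T / (n : ℕ) : ℝ) = T := by
      rw [nsmul_eq_mul]
      field_simp
    rw [this, AddCircle.coe_period]
  set c : ℂ := fourier (-m) t₀ with hc
  have hc1 : c ≠ 1 := by
    intro hceq
    apply hm
    rw [hc, ht₀] at hceq
    rw [fourier_coe_apply] at hceq
    obtain ⟨k, hk⟩ := Complex.exp_eq_one_iff.mp hceq
    have hT0 : (T : ℂ) ≠ 0 := Complex.ofReal_ne_zero.mpr hT.out.ne'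
    have hn0 : ((n : ℕ) : ℂ) ≠ 0 := Nat.cast_ne_zero.mpr n.ne_zero
    have hpi : (2 * (Real.pi : ℂ) * Complex.I) ≠ 0 := by
      simp [Real.pi_ne_zero, Complex.I_ne_zero]
    have h := hk
    field_simp at h
    have hprod : (2 * (Real.pi : ℂ) * Complex.I * (T : ℂ)) ≠ 0 := mul_ne_zero hpi hT0
    have h2 : (2 * (Real.pi : ℂ) * Complex.I * (T : ℂ)) * ((-m : ℤ) : ℂ)
        = (2 * (Real.pi : ℂ) * Complex.I * (T : ℂ)) * ((k : ℂ) * ((n : ℕ) : ℂ)) := by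
      push_cast at h ⊢
      field_simp at h
      linear_combination (2 * (Real.pi : ℂ) * Complex.I * (T : ℂ)) * h
    have h3 : ((-m : ℤ) : ℂ) = (k : ℂ) * ((n : ℕ) : ℂ) := mul_left_cancel₀ hprod h2
    have hint : (-m : ℤ) = k * ((n : ℕ) : ℤ) := by exact_mod_cast h3
    exact ⟨-k, by linarith [hint]⟩
  have key : fourierCoeff (fun x : AddCircle T => g ((n : ℕ) • x)) m
      = c * fourierCoeff (fun x : AddCircle T => g ((n : ℕ) • x)) m := by
    rw [fourierCoeff]
    conv_lhs => rw [← integral_add_right_eq_self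
      (fun x : AddCircle T => fourier (-m) x • g ((n : ℕ) • x)) t₀]
    have : ∀ x : AddCircle T, fourier (-m) (x + t₀) • g ((n : ℕ) • (x + t₀))
        = c * (fourier (-m) x • g ((n : ℕ) • x)) := by
      intro x
      rw [smul_add, hnt, add_zero, fourier_add_pt, hc]
      simp only [smul_eq_mul]
      ring
    simp_rw [this]
    rw [integral_const_mul, ← fourierCoeff]
  have h2 : (1 - c) * fourierCoeff (fun x : AddCircle T => g ((n : ℕ) • x)) m = 0 := by
    linear_combination key
  rcases mul_eq_zero.mp h2 with h | h
  · exact absurd (sub_eq_zero.mp h).symm hc1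
  · exact h

end Aux

/-- If `g ∈ L²(AddCircle T; ℂ)` has first Fourier coefficient `ĝ(1) ≠ 0`, then the family
of dilations `gₙ(x) = g (n • x)`, `n ∈ ℕ+`, is linearly independent in `L²`: any finite
linear combination vanishing almost everywhere has all its coefficients zero. -/
theorem statement5 (T : ℝ) [hT : Fact (0 < T)] (g : AddCircle T → ℂ)
    (hg : MemLp g 2 AddCircle.haarAddCircle) (h1 : fourierCoeff g 1 ≠ 0)
    (s : Finset ℕ+) (coef : ℕ+ → ℂ)
    (hzero : ∀ᵐ x ∂AddCircle.haarAddCircle, ∑ n ∈ s, coef n * g ((n : ℕ) • x) = 0) :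
    ∀ n ∈ s, coef n = 0 := by
  classical
  induction s using Finset.strongInduction with
  | _ s ih =>
    intro n hn
    have hsne : s.Nonempty := ⟨n, hn⟩
    set n₀ : ℕ+ := s.min' hsne with hn₀
    have hn₀s : n₀ ∈ s := s.min'_mem hsne
    -- the coefficient of the minimal element vanishes
    have hcoefmin : coef n₀ = 0 := by
      have hco : fourierCoeff (fun x : AddCircle T =>
          ∑ k ∈ s, coef k * g ((k : ℕ) • x)) (n₀ : ℤ) = 0 := by
        rw [fourierCoeff]
        rw [integral_congr_ae (hzero.mono fun x hx => by rw [hx, smul_zero])]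
        exact integral_zero _ _
      have hsum : fourierCoeff (fun x : AddCircle T =>
          ∑ k ∈ s, coef k * g ((k : ℕ) • x)) (n₀ : ℤ)
          = ∑ k ∈ s, coef k * fourierCoeff (fun x : AddCircle T => g ((k : ℕ) • x)) (n₀ : ℤ) := by
        rw [fourierCoeff]
        have : ∀ x : AddCircle T, fourier (-(n₀ : ℤ)) x • ∑ k ∈ s, coef k * g ((k : ℕ) • x)
            = ∑ k ∈ s, coef k * (fourier (-(n₀ : ℤ)) x • g ((k : ℕ) • x)) := by
          intro x
          rw [Finset.smul_sum]
          refine Finset.sum_congr rfl fun k _ => ?_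
          simp only [smul_eq_mul]
          ring
        simp_rw [this]
        rw [integral_finset_sum _ fun k _ =>
          (integrable_fourier_smul hg k (n₀ : ℤ)).const_mul (coef k)]
        refine Finset.sum_congr rfl fun k _ => ?_
        rw [integral_const_mul, fourierCoeff]
      have hsingle : ∑ k ∈ s, coef k * fourierCoeff (fun x : AddCircle T => g ((k : ℕ) • x)) (n₀ : ℤ)
          = coef n₀ * fourierCoeff g 1 := by
        rw [Finset.sum_eq_single n₀]
        · rw [coeff_dilate_self hg]
        · intro k hk hkne
          have hklt : n₀ < k := lt_of_le_of_ne (s.min'_le k hk) (Ne.symm hkne)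
          have hndvd : ¬ ((k : ℤ) ∣ (n₀ : ℤ)) := by
            intro hdvd
            have := Int.le_of_dvd (by exact_mod_cast n₀.pos) hdvd
            have : (k : ℕ) ≤ (n₀ : ℕ) := by exact_mod_cast this
            exact absurd (show (n₀ : ℕ) < (k : ℕ) by exact_mod_cast hklt) (not_lt.mpr this)
          rw [coeff_dilate_zero hg k (n₀ : ℤ) hndvd, mul_zero]
        · intro h; exact absurd hn₀s h
      have := hco.symm.trans (hsum.trans hsingle) -- 0 = coef n₀ * ĝ1
      rcases mul_eq_zero.mp this.symm with h | h
      · exact h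
      · exact absurd h h1
    -- remove the minimal element and recurse
    by_cases hnn₀ : n = n₀
    · rw [hnn₀]; exact hcoefmin
    · have hrec : ∀ᵐ x ∂AddCircle.haarAddCircle,
          ∑ k ∈ s.erase n₀, coef k * g ((k : ℕ) • x) = 0 := by
        refine hzero.mono fun x hx => ?_
        rw [← Finset.add_sum_erase s _ hn₀s, hcoefmin, zero_mul, zero_add] at hx
        exact hx
      exact ih (s.erase n₀) (Finset.erase_ssubset hn₀s) hrec n (Finset.mem_erase.mpr ⟨hnn₀, hn⟩)
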